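/- For a cyclic 2k-gon with vertices ordered counterclockwise on a circle and chord lengths r_{ps}, the parity-alternating sum R = Σ_{p<s, p≡s (mod 2)} r_{ps}^{-α} − Σ_{p<s, p≢s (mod 2)} r_{ps}^{-α} is strictly negative for all α > 0 and all k ≥ 2; consequently, in the power-law n-body problem, if the mass vector consists of two groups of equal masses (values 1 and m ≠ 1), then for the cyclic shift g = P, the quadratic form H_m(gm − m) = 2(m−1)²·R < 0, ruling out centered co-circular central configurations. -/

import Mathlib

open Matrix

section aux19

open Real Set Finset

private lemma aux19_rpow_neg_convex_ineq {α u v a b : ℝ} (hα : 0 < α) (hu : 0 < u) (hv : 0 < v)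
    (ha : 0 < a) (hb : 0 < b) (hab : a + b = 1) :
    (a * u + b * v) ^ (-α) ≤ a * u ^ (-α) + b * v ^ (-α) := by
  have huv : 0 < a * u + b * v := by positivity
  rw [rpow_def_of_pos huv, rpow_def_of_pos hu, rpow_def_of_pos hv]
  have hlog : a * log u + b * log v ≤ log (a * u + b * v) := by
    have := strictConcaveOn_log_Ioi.concaveOn.2 (mem_Ioi.2 hu) (mem_Ioi.2 hv) ha.le hb.le hab
    simpa [smul_eq_mul] using this
  have h1 : exp (log (a * u + b * v) * (-α)) ≤ exp ((a * log u + b * log v) * (-α)) := by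
    apply exp_le_exp.2
    nlinarith
  refine h1.trans ?_
  have h2 := convexOn_exp.2 (mem_univ (log u * (-α))) (mem_univ (log v * (-α))) ha.le hb.le hab
  rw [show (a * log u + b * log v) * (-α) = a • (log u * (-α)) + b • (log v * (-α)) by
    simp [smul_eq_mul]; ring]
  simpa [smul_eq_mul] using h2

private lemma aux19_gStrictConvex {α : ℝ} (hα : 0 < α) :
    StrictConvexOn ℝ (Ioo 0 π) (fun t => (2 * sin t) ^ (-α)) := by
  refine ⟨convex_Ioo _ _, ?_⟩
  rintro x ⟨hx0, hxπ⟩ y ⟨hy0, hyπ⟩ hxy a b ha hb hab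
  have hsx : 0 < sin x := sin_pos_of_pos_of_lt_pi hx0 hxπ
  have hsy : 0 < sin y := sin_pos_of_pos_of_lt_pi hy0 hyπ
  have hmem : a * x + b * y ∈ Ioo 0 π := (convex_Ioo 0 π) ⟨hx0, hxπ⟩ ⟨hy0, hyπ⟩ ha.le hb.le hab
  have hs : 0 < sin (a * x + b * y) := sin_pos_of_pos_of_lt_pi hmem.1 hmem.2
  have hsin : a * sin x + b * sin y < sin (a * x + b * y) := by
    have := strictConcaveOn_sin_Icc.2 (y := y) ⟨hx0.le, hxπ.le⟩ ⟨hy0.le, hyπ.le⟩ hxy ha hb hab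
    simpa [smul_eq_mul] using this
  have hcomb : 0 < a * (2 * sin x) + b * (2 * sin y) := by positivity
  have step1 : (2 * sin (a * x + b * y)) ^ (-α) < (a * (2 * sin x) + b * (2 * sin y)) ^ (-α) := by
    apply rpow_lt_rpow_of_neg hcomb (by nlinarith) (by linarith)
  have step2 := aux19_rpow_neg_convex_ineq hα (by positivity : (0:ℝ) < 2 * sin x)
    (by positivity : (0:ℝ) < 2 * sin y) ha hb hab
  calc (2 * sin (a • x + b • y)) ^ (-α) = (2 * sin (a * x + b * y)) ^ (-α) := by
        simp [smul_eq_mul]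
    _ < (a * (2 * sin x) + b * (2 * sin y)) ^ (-α) := step1
    _ ≤ a * (2 * sin x) ^ (-α) + b * (2 * sin y) ^ (-α) := step2
    _ = a • (2 * sin x) ^ (-α) + b • (2 * sin y) ^ (-α) := by simp [smul_eq_mul]

private lemma aux19_four_point {s : Set ℝ} {g : ℝ → ℝ} (hg : StrictConvexOn ℝ s g)
    {A B C D : ℝ} (hA : A ∈ s) (hD : D ∈ s)
    (hDB : D < B) (hBA : B < A) (hsum : B + C = D + A) :
    g B + g C < g D + g A := by
  have hAD : 0 < A - D := by linarith
  set l : ℝ := (A - B) / (A - D) with hl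
  have hl0 : 0 < l := div_pos (by linarith) hAD
  have hl1 : l < 1 := (div_lt_one hAD).2 (by linarith)
  have hlAD : l * (A - D) = A - B := by
    rw [hl]; field_simp
  have hB' : l * D + (1 - l) * A = B := by nlinarith [hlAD]
  have hC' : (1 - l) * D + l * A = C := by nlinarith [hlAD]
  have h1 := hg.2 hD hA (by linarith : D ≠ A) hl0 (by linarith : (0:ℝ) < 1 - l) (by ring)
  have h2 := hg.2 hD hA (by linarith : D ≠ A) (by linarith : (0:ℝ) < 1 - l) hl0 (by ring)
  rw [smul_eq_mul, smul_eq_mul, smul_eq_mul, smul_eq_mul, hB'] at h1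
  rw [smul_eq_mul, smul_eq_mul, smul_eq_mul, smul_eq_mul, hC'] at h2
  nlinarith

private lemma aux19_sum_range_two_mul {M : Type*} [AddCommMonoid M] (K : ℕ) (f : ℕ → M) :
    ∑ i ∈ Finset.range (2 * K), f i = ∑ m ∈ Finset.range K, (f (2 * m) + f (2 * m + 1)) := by
  induction K with
  | zero => simp
  | succ K ih =>
    rw [show 2 * (K + 1) = 2 * K + 1 + 1 by ring, Finset.sum_range_succ, Finset.sum_range_succ,
      Finset.sum_range_succ, ih]
    abel

private lemma aux19_key_neg (w : ℕ → ℕ → ℝ) :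
    ∀ K : ℕ, 1 ≤ K →
    (∀ p s, p < s → s < 2 * K → 0 < w p s) →
    (∀ a b c d, a < b → b < c → c < d → d < 2 * K → w a c + w b d < w b c + w a d) →
    (∑ s ∈ Finset.range (2 * K), ∑ p ∈ Finset.range s,
      (if p % 2 = s % 2 then (1:ℝ) else -1) * w p s) < 0 := by
  intro K
  induction K with
  | zero => omega
  | succ K ih =>
    intro _ hpos h4
    rcases Nat.eq_or_lt_of_le (show 1 ≤ K + 1 from by omega) with h1 | h1
    · have hK : K = 0 := by omega
      subst hK
      norm_num [Finset.sum_range_succ]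
      exact hpos 0 1 (by omega) (by omega)
    · have hK1 : 1 ≤ K := by omega
      have hrec := ih hK1 (fun p s h1 h2 => hpos p s h1 (by omega))
        (fun a b c d h1 h2 h3 h4' => h4 a b c d h1 h2 h3 (by omega))
      rw [show 2 * (K + 1) = 2 * K + 1 + 1 by ring, Finset.sum_range_succ, Finset.sum_range_succ]
      rw [Finset.sum_range_succ]
      have hlast : (if (2 * K) % 2 = (2 * K + 1) % 2 then (1:ℝ) else -1) * w (2 * K) (2 * K + 1)
          = -w (2 * K) (2 * K + 1) := by
        rw [if_neg (by omega)]; ring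
      rw [hlast]
      have hcomb : (∑ p ∈ Finset.range (2 * K),
            (if p % 2 = (2 * K) % 2 then (1:ℝ) else -1) * w p (2 * K))
          + (∑ p ∈ Finset.range (2 * K),
            (if p % 2 = (2 * K + 1) % 2 then (1:ℝ) else -1) * w p (2 * K + 1)) ≤ 0 := by
        rw [← Finset.sum_add_distrib, aux19_sum_range_two_mul]
        apply Finset.sum_nonpos
        intro m hm
        have hm' : m < K := Finset.mem_range.1 hm
        have e1 : (2 * m) % 2 = (2 * K) % 2 := by omega
        have e2 : ¬ (2 * m) % 2 = (2 * K + 1) % 2 := by omega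
        have e3 : ¬ (2 * m + 1) % 2 = (2 * K) % 2 := by omega
        have e4 : (2 * m + 1) % 2 = (2 * K + 1) % 2 := by omega
        rw [if_pos e1, if_neg e2, if_neg e3, if_pos e4]
        have := h4 (2 * m) (2 * m + 1) (2 * K) (2 * K + 1) (by omega) (by omega) (by omega)
          (by omega)
        linarith
      have hwpos := hpos (2 * K) (2 * K + 1) (by omega) (by omega)
      linarith

end aux19

/-- For a cyclic `2k`-gon (`k ≥ 2`) the parity-alternating sum
`R = Σ_{p<s, p≡s} r^{-α} − Σ_{p<s, p≢s} r^{-α}` is strictly negative; consequently,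
for a mass vector taking the value `m₀ ≠ 1` at `k` pairwise nonadjacent positions
`i₁ < … < i_k` among `N` bodies on the unit circle and the value `1` elsewhere, the
vector `v = Pm − m` (supported with alternating values `±(m₀−1)` on the `2k`
vertices `i₁−1, i₁, …, i_k−1, i_k`, selected here by the strictly monotone map `ι`)
satisfies `vᵀH_m v = 2(m₀−1)²·R < 0`, ruling out centered co-circular central
configurations. -/
theorem stmt_19 (N k : ℕ) (hk : 2 ≤ k) (hkN : 2 * k ≤ N) (α : ℝ) (hα : 0 < α)
    (θ : Fin N → ℝ) (hmono : StrictMono θ) (hrange : ∀ i, θ i ∈ Set.Ico 0 (2 * Real.pi))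
    (m₀ : ℝ) (hm₀ : m₀ ≠ 1)
    (ι : Fin (2 * k) → Fin N) (hι : StrictMono ι)
    (H : Matrix (Fin N) (Fin N) ℝ)
    (hH : H = fun i j =>
      if i = j then 0 else (2 * |Real.sin ((θ i - θ j) / 2)|) ^ (-α))
    (v : Fin N → ℝ)
    (hv : v = fun t => ∑ p : Fin (2 * k),
      if ι p = t then (if (p : ℕ) % 2 = 0 then m₀ - 1 else 1 - m₀) else 0)
    (Rsum : ℝ)
    (hR : Rsum =
      (∑ q ∈ Finset.univ.filter
          (fun q : Fin (2 * k) × Fin (2 * k) => q.1 < q.2 ∧ (q.1 : ℕ) % 2 = (q.2 : ℕ) % 2),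
          (2 * |Real.sin ((θ (ι q.1) - θ (ι q.2)) / 2)|) ^ (-α)) -
        ∑ q ∈ Finset.univ.filter
          (fun q : Fin (2 * k) × Fin (2 * k) => q.1 < q.2 ∧ (q.1 : ℕ) % 2 ≠ (q.2 : ℕ) % 2),
          (2 * |Real.sin ((θ (ι q.1) - θ (ι q.2)) / 2)|) ^ (-α)) :
    Rsum < 0 ∧ v ⬝ᵥ H.mulVec v = 2 * (m₀ - 1) ^ 2 * Rsum ∧ v ⬝ᵥ H.mulVec v < 0 := by
  classical
  -- basic objects
  set W : Fin (2 * k) → Fin (2 * k) → ℝ :=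
    fun p s => (2 * |Real.sin ((θ (ι p) - θ (ι s)) / 2)|) ^ (-α) with hW
  set y : Fin (2 * k) → ℝ := fun p => θ (ι p) / 2 with hy
  have hymono : StrictMono y := fun p s h => by
    have := hmono (hι h); simp only [hy]; linarith
  have hyd : ∀ p s : Fin (2 * k), p < s → y s - y p ∈ Set.Ioo 0 Real.pi := by
    intro p s hps
    have h1 := hymono hps
    have h2 := (hrange (ι p)).1
    have h3 := (hrange (ι s)).2
    have h4 := (hrange (ι s)).1
    have h5 := (hrange (ι p)).2
    constructor
    · linarith
    · simp only [hy] at *; linarith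
  have hWsin : ∀ p s : Fin (2 * k), p < s → W p s = (2 * Real.sin (y s - y p)) ^ (-α) := by
    intro p s hps
    have hmem := hyd p s hps
    have hpos : 0 < Real.sin (y s - y p) :=
      Real.sin_pos_of_pos_of_lt_pi hmem.1 hmem.2
    have harg : (θ (ι p) - θ (ι s)) / 2 = -(y s - y p) := by simp only [hy]; ring
    rw [hW]
    simp only [harg, Real.sin_neg, abs_neg, abs_of_pos hpos]
  have hWpos : ∀ p s : Fin (2 * k), p ≠ s → 0 < W p s := by
    intro p s hps
    apply Real.rpow_pos_of_pos
    have : Real.sin ((θ (ι p) - θ (ι s)) / 2) ≠ 0 := by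
      rcases lt_or_gt_of_ne hps with h | h
      · have := hyd p s h
        have : 0 < Real.sin (y s - y p) := Real.sin_pos_of_pos_of_lt_pi this.1 this.2
        have harg : (θ (ι p) - θ (ι s)) / 2 = -(y s - y p) := by simp only [hy]; ring
        rw [harg, Real.sin_neg]; linarith
      · have := hyd s p h
        have : 0 < Real.sin (y p - y s) := Real.sin_pos_of_pos_of_lt_pi this.1 this.2
        have harg : (θ (ι p) - θ (ι s)) / 2 = y p - y s := by simp only [hy]; ring
        rw [harg]; linarith
    have := abs_pos.2 this
    linarith
  have hWsymm : ∀ p s : Fin (2 * k), W p s = W s p := by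
    intro p s
    rw [hW]
    have : (θ (ι p) - θ (ι s)) / 2 = -((θ (ι s) - θ (ι p)) / 2) := by ring
    simp only [this, Real.sin_neg, abs_neg]
  -- ℕ-indexed weight
  set w : ℕ → ℕ → ℝ := fun p s =>
    if h : p < 2 * k ∧ s < 2 * k then W ⟨p, h.1⟩ ⟨s, h.2⟩ else 1 with hw
  have hwW : ∀ p s : Fin (2 * k), w ↑p ↑s = W p s := by
    intro p s
    rw [hw]
    simp only [dif_pos (And.intro p.isLt s.isLt), Fin.eta]
  -- step A : Rsum as a single signed sum
  have hR1 : Rsum = ∑ q ∈ Finset.univ.filter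
      (fun q : Fin (2 * k) × Fin (2 * k) => q.1 < q.2),
      (if (q.1 : ℕ) % 2 = (q.2 : ℕ) % 2 then (1:ℝ) else -1) * W q.1 q.2 := by
    rw [hR, sub_eq_add_neg]
    rw [← Finset.sum_filter_add_sum_filter_not
      (Finset.univ.filter (fun q : Fin (2 * k) × Fin (2 * k) => q.1 < q.2))
      (fun q : Fin (2 * k) × Fin (2 * k) => (q.1 : ℕ) % 2 = (q.2 : ℕ) % 2)]
    rw [Finset.filter_filter, Finset.filter_filter]
    congr 1
    · apply Finset.sum_congr rfl
      intro q hq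
      have := (Finset.mem_filter.1 hq).2.2
      rw [if_pos this, one_mul]
    · rw [← Finset.sum_neg_distrib]
      apply Finset.sum_congr rfl
      intro q hq
      have := (Finset.mem_filter.1 hq).2.2
      rw [if_neg this]; ring
  -- part 1 : Rsum < 0
  have hRneg : Rsum < 0 := by
    have hR2 : Rsum = ∑ p : Fin (2 * k), ∑ s : Fin (2 * k),
        (if p < s then (if (p : ℕ) % 2 = (s : ℕ) % 2 then (1:ℝ) else -1) * W p s else 0) := by
      rw [hR1, Finset.sum_filter, Fintype.sum_prod_type]
    have hR3 : Rsum = ∑ p ∈ Finset.range (2 * k), ∑ s ∈ Finset.range (2 * k),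
        (if p < s then (if p % 2 = s % 2 then (1:ℝ) else -1) * w p s else 0) := by
      rw [hR2]
      rw [← Fin.sum_univ_eq_sum_range (fun pp => ∑ s ∈ Finset.range (2 * k),
        (if pp < s then (if pp % 2 = s % 2 then (1:ℝ) else -1) * w pp s else 0)) (2 * k)]
      apply Finset.sum_congr rfl
      intro p _
      rw [← Fin.sum_univ_eq_sum_range (fun ss =>
        (if ↑p < ss then (if ↑p % 2 = ss % 2 then (1:ℝ) else -1) * w ↑p ss else 0)) (2 * k)]
      apply Finset.sum_congr rfl
      intro s _
      rw [hwW p s]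
      congr 1
    have hR4 : Rsum = ∑ s ∈ Finset.range (2 * k), ∑ p ∈ Finset.range s,
        (if p % 2 = s % 2 then (1:ℝ) else -1) * w p s := by
      rw [hR3, Finset.sum_comm]
      apply Finset.sum_congr rfl
      intro s hs
      have hsn : s ≤ 2 * k := le_of_lt (Finset.mem_range.1 hs)
      rw [← Finset.sum_subset (Finset.range_subset_range.2 hsn)
        (fun p _ hp => by rw [if_neg (by simpa using hp)])]
      apply Finset.sum_congr rfl
      intro p hp
      rw [if_pos (Finset.mem_range.1 hp)]
    rw [hR4]
    apply aux19_key_neg w k (by omega)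
    · intro p s h1 h2
      have hps : (⟨p, by omega⟩ : Fin (2 * k)) < ⟨s, h2⟩ := by simpa [Fin.lt_def] using h1
      have := hWpos ⟨p, by omega⟩ ⟨s, h2⟩ (ne_of_lt hps)
      rw [hw]
      simpa [dif_pos (And.intro (show p < 2 * k by omega) (show s < 2 * k from h2))] using this
    · intro a b c d h1 h2 h3 h4
      have han : a < 2 * k := by omega
      have hbn : b < 2 * k := by omega
      have hcn : c < 2 * k := by omega
      set a' : Fin (2 * k) := ⟨a, han⟩
      set b' : Fin (2 * k) := ⟨b, hbn⟩
      set c' : Fin (2 * k) := ⟨c, hcn⟩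
      set d' : Fin (2 * k) := ⟨d, h4⟩
      have hab : a' < b' := Fin.lt_def.2 h1
      have hbc : b' < c' := Fin.lt_def.2 h2
      have hcd : c' < d' := Fin.lt_def.2 h3
      have hac : a' < c' := lt_trans hab hbc
      have hbd : b' < d' := lt_trans hbc hcd
      have had : a' < d' := lt_trans hac hcd
      have e1 : w a c = (2 * Real.sin (y c' - y a')) ^ (-α) := by
        rw [show w a c = W a' c' from hwW a' c', hWsin _ _ hac]
      have e2 : w b d = (2 * Real.sin (y d' - y b')) ^ (-α) := by
        rw [show w b d = W b' d' from hwW b' d', hWsin _ _ hbd]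
      have e3 : w b c = (2 * Real.sin (y c' - y b')) ^ (-α) := by
        rw [show w b c = W b' c' from hwW b' c', hWsin _ _ hbc]
      have e4 : w a d = (2 * Real.sin (y d' - y a')) ^ (-α) := by
        rw [show w a d = W a' d' from hwW a' d', hWsin _ _ had]
      rw [e1, e2, e3, e4]
      exact aux19_four_point (aux19_gStrictConvex hα) (hyd a' d' had) (hyd b' c' hbc)
        (by have := hymono hab; linarith) (by have := hymono hcd; linarith) (by ring)
  -- part 2 : the identity
  set c : Fin (2 * k) → ℝ := fun p => if (p : ℕ) % 2 = 0 then m₀ - 1 else 1 - m₀ with hc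
  have hvι : ∀ p : Fin (2 * k), v (ι p) = c p := by
    intro p
    rw [hv]
    simp [hι.injective.eq_iff, hc]
  have hv0 : ∀ t, t ∉ Finset.image ι Finset.univ → v t = 0 := by
    intro t ht
    rw [hv]
    apply Finset.sum_eq_zero
    intro q _
    rw [if_neg]
    intro h
    exact ht (Finset.mem_image.2 ⟨q, Finset.mem_univ q, h⟩)
  have hQ1 : v ⬝ᵥ H.mulVec v = ∑ i : Fin N, ∑ j : Fin N, v i * (H i j * v j) := by
    simp only [dotProduct, Matrix.mulVec, Finset.mul_sum]
  have hQ2 : v ⬝ᵥ H.mulVec v =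
      ∑ p : Fin (2 * k), ∑ q : Fin (2 * k), c p * (H (ι p) (ι q) * c q) := by
    rw [hQ1]
    rw [← Finset.sum_subset (Finset.subset_univ (Finset.image ι Finset.univ))
      (fun i _ hi => by
        rw [hv0 i hi]
        simp)]
    rw [Finset.sum_image (fun x _ y _ h => hι.injective h)]
    apply Finset.sum_congr rfl
    intro p _
    rw [← Finset.sum_subset (Finset.subset_univ (Finset.image ι Finset.univ))
      (fun j _ hj => by rw [hv0 j hj]; simp)]
    rw [Finset.sum_image (fun x _ y _ h => hι.injective h)]
    apply Finset.sum_congr rfl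
    intro q _
    rw [hvι p, hvι q]
  have hHW : ∀ p q : Fin (2 * k), H (ι p) (ι q) = if p = q then 0 else W p q := by
    intro p q
    rw [hH, hW]
    simp only [hι.injective.eq_iff]
  have hcc : ∀ p q : Fin (2 * k), c p * c q =
      (m₀ - 1) ^ 2 * (if (p : ℕ) % 2 = (q : ℕ) % 2 then (1:ℝ) else -1) := by
    intro p q
    rw [hc]
    rcases Nat.mod_two_eq_zero_or_one (p : ℕ) with hp | hp <;>
      rcases Nat.mod_two_eq_zero_or_one (q : ℕ) with hq | hq <;>
      simp only [hp, hq] <;> norm_num <;> ring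
  have hQ3 : v ⬝ᵥ H.mulVec v = (m₀ - 1) ^ 2 *
      ∑ z : Fin (2 * k) × Fin (2 * k),
        (if z.1 = z.2 then 0 else
          (if (z.1 : ℕ) % 2 = (z.2 : ℕ) % 2 then (1:ℝ) else -1) * W z.1 z.2) := by
    rw [hQ2, Finset.mul_sum, Fintype.sum_prod_type]
    apply Finset.sum_congr rfl
    intro p _
    apply Finset.sum_congr rfl
    intro q _
    simp only
    rw [hHW]
    by_cases h : p = q
    · rw [if_pos h, if_pos h]
      ring
    · rw [if_neg h, if_neg h]
      rw [show c p * (W p q * c q) = (c p * c q) * W p q from by ring, hcc]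
      ring
  -- fold the double sum to twice the upper-triangular sum
  set F : Fin (2 * k) × Fin (2 * k) → ℝ := fun z =>
    if z.1 = z.2 then 0 else
      (if (z.1 : ℕ) % 2 = (z.2 : ℕ) % 2 then (1:ℝ) else -1) * W z.1 z.2 with hF
  have hFsymm : ∀ z : Fin (2 * k) × Fin (2 * k), F (z.2, z.1) = F z := by
    intro z
    rw [hF]
    simp only
    by_cases h : z.1 = z.2
    · rw [if_pos h, if_pos h.symm]
    · rw [if_neg h, if_neg (Ne.symm h), hWsymm z.2 z.1]
      congr 1
      by_cases hpar : (z.1 : ℕ) % 2 = (z.2 : ℕ) % 2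
      · rw [if_pos hpar, if_pos hpar.symm]
      · rw [if_neg hpar, if_neg (fun hh => hpar hh.symm)]
  have hsplit : ∑ z : Fin (2 * k) × Fin (2 * k), F z =
      2 * ∑ z ∈ Finset.univ.filter (fun z : Fin (2 * k) × Fin (2 * k) => z.1 < z.2), F z := by
    rw [← Finset.sum_filter_add_sum_filter_not Finset.univ
      (fun z : Fin (2 * k) × Fin (2 * k) => z.1 < z.2) F]
    have hgt : ∑ z ∈ Finset.univ.filter
        (fun z : Fin (2 * k) × Fin (2 * k) => ¬ z.1 < z.2), F z =
        ∑ z ∈ Finset.univ.filter (fun z : Fin (2 * k) × Fin (2 * k) => z.2 < z.1), F z := by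
      have hsub : Finset.univ.filter (fun z : Fin (2 * k) × Fin (2 * k) => z.2 < z.1) ⊆
          Finset.univ.filter (fun z : Fin (2 * k) × Fin (2 * k) => ¬ z.1 < z.2) := by
        intro z hz
        simp only [Finset.mem_filter, Finset.mem_univ, true_and] at hz ⊢
        exact not_lt.2 hz.le
      rw [← Finset.sum_subset hsub]
      · intro z hz hz2
        have h1 : ¬ z.1 < z.2 := by simpa using (Finset.mem_filter.1 hz).2
        have h2 : ¬ z.2 < z.1 := by
          intro h
          exact hz2 (Finset.mem_filter.2 ⟨Finset.mem_univ z, h⟩)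
        have : z.1 = z.2 := le_antisymm (not_lt.1 h2) (not_lt.1 h1)
        rw [hF]
        simp [this]
    rw [hgt]
    have hswap : ∑ z ∈ Finset.univ.filter
        (fun z : Fin (2 * k) × Fin (2 * k) => z.2 < z.1), F z =
        ∑ z ∈ Finset.univ.filter (fun z : Fin (2 * k) × Fin (2 * k) => z.1 < z.2), F z := by
      apply Finset.sum_nbij' (fun z => (z.2, z.1)) (fun z => (z.2, z.1))
      · intro z hz
        simp only [Finset.mem_filter, Finset.mem_univ, true_and] at hz ⊢
        exact hz
      · intro z hz
        simp only [Finset.mem_filter, Finset.mem_univ, true_and] at hz ⊢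
        exact hz
      · intro z _; rfl
      · intro z _; rfl
      · intro z _
        exact (hFsymm z).symm
    rw [hswap]
    ring
  have hident : v ⬝ᵥ H.mulVec v = 2 * (m₀ - 1) ^ 2 * Rsum := by
    rw [hQ3, hsplit, hR1]
    rw [show ∑ z ∈ Finset.univ.filter (fun z : Fin (2 * k) × Fin (2 * k) => z.1 < z.2), F z =
        ∑ z ∈ Finset.univ.filter (fun z : Fin (2 * k) × Fin (2 * k) => z.1 < z.2),
          (if (z.1 : ℕ) % 2 = (z.2 : ℕ) % 2 then (1:ℝ) else -1) * W z.1 z.2 from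
      Finset.sum_congr rfl (fun z hz => by
        rw [hF]
        simp only
        rw [if_neg (ne_of_lt (Finset.mem_filter.1 hz).2)])]
    ring
  refine ⟨hRneg, hident, ?_⟩
  rw [hident]
  have hsq : 0 < (m₀ - 1) ^ 2 := by
    have : m₀ - 1 ≠ 0 := sub_ne_zero.2 hm₀
    positivity
  nlinarith
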